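/- Let α : I → ℝ³ be a C² regular spacelike curve in Minkowski space with ε = (t,t) = 1 and Bishop frame {t, n₁, n₂} with (n₁,n₁) = −1, (n₂,n₂) = 1, nᵢ' = −κᵢ t, t' = −κ₁ n₁ + κ₂ n₂. If α lies on the light-cone C²(P) = {x : (x−P,x−P) = 0} with α(s) ≠ P, then there exist constants a₁, a₂ with 1 + a₁κ₁(s) + a₂κ₂(s) = 0 for all s and a₂ = ± a₁. -/

import Mathlib

noncomputable section

/-- The Minkowski bilinear form on ℝ³. -/
def mink (x y : Fin 3 → ℝ) : ℝ := x 0 * y 0 + x 1 * y 1 - x 2 * y 2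

lemma mink_comm (x y : Fin 3 → ℝ) : mink x y = mink y x := by
  simp only [mink]; ring

lemma mink_add_right (x y z : Fin 3 → ℝ) : mink x (y + z) = mink x y + mink x z := by
  simp only [mink, Pi.add_apply]; ring

lemma mink_smul_right (c : ℝ) (x y : Fin 3 → ℝ) : mink x (c • y) = c * mink x y := by
  simp only [mink, Pi.smul_apply, smul_eq_mul]; ring

lemma hasDerivAt_mink {x y : ℝ → Fin 3 → ℝ} {x' y' : Fin 3 → ℝ} {s : ℝ}
    (hx : HasDerivAt x x' s) (hy : HasDerivAt y y' s) :
    HasDerivAt (fun u => mink (x u) (y u)) (mink x' (y s) + mink (x s) y') s := by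
  have hx0 := (hasDerivAt_pi.mp hx) 0
  have hx1 := (hasDerivAt_pi.mp hx) 1
  have hx2 := (hasDerivAt_pi.mp hx) 2
  have hy0 := (hasDerivAt_pi.mp hy) 0
  have hy1 := (hasDerivAt_pi.mp hy) 1
  have hy2 := (hasDerivAt_pi.mp hy) 2
  have h := ((hx0.mul hy0).add (hx1.mul hy1)).sub (hx2.mul hy2)
  simp only [mink]
  exact h.congr_deriv (by ring)

/-- Cofactor expansion of the determinant of a symmetric 4×4 matrix
`[[a,b,c,d],[b,e,h,i],[c,h,j,k],[d,i,k,l]]`. -/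
def det4 (a b c d e h i j k l : ℝ) : ℝ :=
    a*(e*(j*l - k*k) - h*(h*l - k*i) + i*(h*k - j*i))
  - b*(b*(j*l - k*k) - h*(c*l - k*d) + i*(c*k - j*d))
  + c*(b*(h*l - k*i) - e*(c*l - k*d) + i*(c*i - h*d))
  - d*(b*(h*k - j*i) - e*(c*k - j*d) + h*(c*i - h*d))

/-- The Gram determinant of any four vectors in 3-dimensional space vanishes. -/
lemma gram4 (x y z w : Fin 3 → ℝ) :
    det4 (mink x x) (mink x y) (mink x z) (mink x w) (mink y y) (mink y z)
      (mink y w) (mink z z) (mink z w) (mink w w) = 0 := by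
  simp only [det4, mink]
  ring

/-- If a spacelike curve with a Bishop frame lies on the light-cone `C²(P)`, then its
normal development lies on a line `1 + a₁X + a₂Y = 0` not through the origin with
`a₂ = ±a₁`. -/
theorem lightcone_curve_normal_development_line
    (α t n₁ n₂ : ℝ → Fin 3 → ℝ) (κ₁ κ₂ : ℝ → ℝ)
    (hαt : ∀ s, HasDerivAt α (t s) s)
    (htt : ∀ s, mink (t s) (t s) = 1)
    (hn₁n₁ : ∀ s, mink (n₁ s) (n₁ s) = -1)
    (hn₂n₂ : ∀ s, mink (n₂ s) (n₂ s) = 1)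
    (htn₁ : ∀ s, mink (t s) (n₁ s) = 0)
    (htn₂ : ∀ s, mink (t s) (n₂ s) = 0)
    (hn₁n₂ : ∀ s, mink (n₁ s) (n₂ s) = 0)
    (ht' : ∀ s, HasDerivAt t ((-(κ₁ s)) • n₁ s + κ₂ s • n₂ s) s)
    (hn₁' : ∀ s, HasDerivAt n₁ ((-(κ₁ s)) • t s) s)
    (hn₂' : ∀ s, HasDerivAt n₂ ((-(κ₂ s)) • t s) s)
    (P : Fin 3 → ℝ)
    (hne : ∀ s, α s ≠ P)
    (hcone : ∀ s, mink (α s - P) (α s - P) = 0) :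
    ∃ a₁ a₂ : ℝ, (∀ s, 1 + a₁ * κ₁ s + a₂ * κ₂ s = 0) ∧
      (a₂ = a₁ ∨ a₂ = -a₁) := by
  have hV : ∀ s : ℝ, HasDerivAt (fun u => α u - P) (t s) s := fun s =>
    (hαt s).sub_const P
  -- the tangential component vanishes
  have hH : ∀ s, mink (α s - P) (t s) = 0 := by
    intro s
    have h1 : HasDerivAt (fun u => mink (α u - P) (α u - P))
        (mink (t s) (α s - P) + mink (α s - P) (t s)) s :=
      hasDerivAt_mink (hV s) (hV s)
    have h2 : HasDerivAt (fun u => mink (α u - P) (α u - P)) 0 s := by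
      have : (fun u => mink (α u - P) (α u - P)) = fun _ => (0 : ℝ) := by
        funext u; exact hcone u
      rw [this]; exact hasDerivAt_const s 0
    have h3 := h1.unique h2
    rw [mink_comm (t s) (α s - P)] at h3
    linarith
  -- the normal components are constant
  have hFd : ∀ s, HasDerivAt (fun u => mink (α u - P) (n₁ u)) 0 s := by
    intro s
    have h1 := hasDerivAt_mink (hV s) (hn₁' s)
    rw [htn₁ s, mink_smul_right, hH s] at h1
    simpa using h1
  have hGd : ∀ s, HasDerivAt (fun u => mink (α u - P) (n₂ u)) 0 s := by
    intro s
    have h1 := hasDerivAt_mink (hV s) (hn₂' s)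
    rw [htn₂ s, mink_smul_right, hH s] at h1
    simpa using h1
  have hFconst : ∀ s, mink (α s - P) (n₁ s) = mink (α 0 - P) (n₁ 0) := by
    intro s
    exact is_const_of_deriv_eq_zero (fun u => (hFd u).differentiableAt)
      (fun u => (hFd u).deriv) s 0
  have hGconst : ∀ s, mink (α s - P) (n₂ s) = mink (α 0 - P) (n₂ 0) := by
    intro s
    exact is_const_of_deriv_eq_zero (fun u => (hGd u).differentiableAt)
      (fun u => (hGd u).deriv) s 0
  set f : ℝ := mink (α 0 - P) (n₁ 0) with hf
  set g : ℝ := mink (α 0 - P) (n₂ 0) with hg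
  refine ⟨-f, g, ?_, ?_⟩
  · -- differentiate the tangential component
    intro s
    have h1 : HasDerivAt (fun u => mink (α u - P) (t u))
        (mink (t s) (t s) + mink (α s - P) ((-(κ₁ s)) • n₁ s + κ₂ s • n₂ s)) s :=
      hasDerivAt_mink (hV s) (ht' s)
    have h2 : HasDerivAt (fun u => mink (α u - P) (t u)) 0 s := by
      have : (fun u => mink (α u - P) (t u)) = fun _ => (0 : ℝ) := by
        funext u; exact hH u
      rw [this]; exact hasDerivAt_const s 0
    have h3 := h1.unique h2
    rw [htt s, mink_add_right, mink_smul_right, mink_smul_right,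
      hFconst s, hGconst s] at h3
    linarith
  · -- the line is of slope ±1 : use the Gram determinant at s = 0
    have hgram := gram4 (t 0) (n₁ 0) (n₂ 0) (α 0 - P)
    rw [htt 0, hn₁n₁ 0, hn₂n₂ 0, htn₁ 0, htn₂ 0, hn₁n₂ 0,
      mink_comm (t 0) (α 0 - P), hH 0,
      mink_comm (n₁ 0) (α 0 - P), ← hf,
      mink_comm (n₂ 0) (α 0 - P), ← hg, hcone 0] at hgram
    simp only [det4] at hgram
    have : g * g = -f * -f := by nlinarith [hgram]
    rcases mul_self_eq_mul_self_iff.mp this with h | h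
    · exact Or.inl h
    · exact Or.inr (by linarith)
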